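/- Let G₁ and G₂ be connected cubic graphs, each with a spanning tree Tᵢ whose cotree has exactly one odd component, consisting of a single edge eᵢ. Form G from (G₁ − e₁) ∪ (G₂ − e₂) by adding two independent edges f₁, f₂ joining the 2-valent vertices across, making G cubic. Then (T₁ ∪ T₂) + f₁ is a spanning tree of G whose cotree has exactly one odd component, consisting of the single edge f₂; in particular G is upper-embeddable with odd Betti number. -/

import Mathlib

open SimpleGraph Finset

/-- The set of edges of `H` lying in the connected component `c` of `H`. -/
def cotreeCompEdges {V : Type*} (H : SimpleGraph V) (c : H.ConnectedComponent) :
    Set (Sym2 V) :=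
  {e | e ∈ H.edgeSet ∧ ∀ v ∈ e, H.connectedComponentMk v = c}

lemma reachable_closed {V : Type*} {H : SimpleGraph V} (P : V → Prop)
    (hcl : ∀ x y, P x → H.Adj x y → P y) :
    ∀ {u v : V}, H.Reachable u v → P u → P v := by
  intro u v h
  obtain ⟨w⟩ := h
  induction w with
  | nil => exact id
  | cons h' p ih => exact fun hu => ih (hcl _ _ hu h')

lemma mem_cotree_of_adj {V : Type*} {H : SimpleGraph V} {x y : V} (h : H.Adj x y) :
    s(x, y) ∈ cotreeCompEdges H (H.connectedComponentMk x) := by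
  refine ⟨h, ?_⟩
  intro v hv
  rcases Sym2.mem_iff.mp hv with rfl | rfl
  · rfl
  · exact ConnectedComponent.sound h.symm.reachable

lemma odd_ncard_edgeSet {V : Type*} [Fintype V] (H : SimpleGraph V)
    (c₀ : H.ConnectedComponent)
    (h1 : Odd ((cotreeCompEdges H c₀).ncard))
    (h2 : ∀ c, c ≠ c₀ → Even ((cotreeCompEdges H c).ncard)) :
    Odd (H.edgeSet.ncard) := by
  classical
  haveI : Fintype H.ConnectedComponent := Fintype.ofFinite _
  set g : Sym2 V → H.ConnectedComponent := fun e => H.connectedComponentMk e.out.1 with hg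
  set F : Finset (Sym2 V) := H.edgeSet.toFinset with hF
  have hA : ∀ e ∈ H.edgeSet, ∀ v ∈ e, H.connectedComponentMk v = g e := by
    intro e he
    induction e using Sym2.ind with
    | _ p q =>
      rw [SimpleGraph.mem_edgeSet] at he
      intro v hv
      have h1 : H.connectedComponentMk p = H.connectedComponentMk q :=
        ConnectedComponent.sound he.reachable
      have hout := Sym2.out_fst_mem s(p, q)
      have h2 : H.connectedComponentMk (Quot.out (s(p,q) : Sym2 V)).1
          = H.connectedComponentMk p := by
        rcases Sym2.mem_iff.mp hout with h | h
        · rw [h]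
        · rw [h]; exact h1.symm
      rcases Sym2.mem_iff.mp hv with rfl | rfl
      · exact h2.symm
      · rw [← h1]; exact h2.symm
  have hB : ∀ c, cotreeCompEdges H c = ↑(F.filter (fun e => g e = c)) := by
    intro c
    ext e
    simp only [Finset.coe_filter, Set.mem_setOf_eq, hF, Set.mem_toFinset]
    constructor
    · rintro ⟨he, hc⟩
      exact ⟨he, by rw [← hA e he e.out.1 (Sym2.out_fst_mem e)]; exact hc _ (Sym2.out_fst_mem e)⟩
    · rintro ⟨he, hc⟩
      exact ⟨he, fun v hv => by rw [hA e he v hv, hc]⟩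
  have hcard : ∀ c, (cotreeCompEdges H c).ncard = (F.filter (fun e => g e = c)).card := by
    intro c; rw [hB c, Set.ncard_coe_finset]
  have hsum : F.card = ∑ c : H.ConnectedComponent, (F.filter (fun e => g e = c)).card :=
    Finset.card_eq_sum_card_fiberwise (fun e _ => Finset.mem_univ _)
  have hncard : H.edgeSet.ncard = F.card := by rw [hF, Set.ncard_eq_toFinset_card']
  rw [hncard, hsum, ← Finset.add_sum_erase _ _ (Finset.mem_univ c₀)]
  apply Odd.add_even
  · rw [← hcard]; exact h1
  · apply Finset.sum_induction _ Even (fun a b => Even.add) Even.zero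
    intro c hc
    rw [← hcard]
    exact h2 c (Finset.ne_of_mem_erase hc)

lemma deleteEdge_adj {V : Type*} (Θ : SimpleGraph V) (e : Sym2 V) (u v : V) :
    (Θ \ fromEdgeSet {e}).Adj u v ↔ Θ.Adj u v ∧ s(u, v) ≠ e := by
  simp only [sdiff_adj, fromEdgeSet_adj, Set.mem_singleton_iff, not_and, not_ne_iff]
  constructor
  · rintro ⟨h1, h2⟩
    refine ⟨h1, fun he => h1.ne ?_⟩
    exact h2 he
  · rintro ⟨h1, h2⟩
    exact ⟨h1, fun he => absurd he h2⟩

lemma edge_eq_of_comp_eq {V : Type*} {K : SimpleGraph V} {a b u v : V}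
    (hodd : cotreeCompEdges K (K.connectedComponentMk a) = {s(a, b)})
    (huv : K.Adj u v) (hc : K.connectedComponentMk u = K.connectedComponentMk a) :
    s(u, v) = s(a, b) := by
  have h := mem_cotree_of_adj huv
  rw [hc, hodd] at h
  exact h

lemma bridge_side {V U : Type*} {Θ : SimpleGraph U} {K : SimpleGraph V}
    {ι : V → U} (hι : Function.Injective ι) (a : V)
    (hadj : ∀ x y, Θ.Adj (ι x) (ι y) ↔ K.Adj x y)
    (hcross : ∀ x z, Θ.Adj (ι x) z → (∃ y, z = ι y) ∨ x = a)
    {x y : V} (hbr : ¬ (K \ fromEdgeSet {s(x, y)}).Reachable x y) :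
    ¬ (Θ \ fromEdgeSet {s(ι x, ι y)}).Reachable (ι x) (ι y) := by
  intro hreach
  set K' := K \ fromEdgeSet {s(x, y)} with hK'
  set P : U → Prop := fun z =>
    (∃ w, z = ι w ∧ K'.Reachable x w) ∨ ((∀ w, z ≠ ι w) ∧ K'.Reachable x a) with hP
  have hclosed : ∀ u v, P u → (Θ \ fromEdgeSet {s(ι x, ι y)}).Adj u v → P v := by
    intro u v hPu huv
    rw [deleteEdge_adj] at huv
    obtain ⟨hΘ, hneq⟩ := huv
    rcases hPu with ⟨w, rfl, hRw⟩ | ⟨hnu, hRa⟩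
    · by_cases hv : ∃ w', v = ι w'
      · obtain ⟨w', rfl⟩ := hv
        have hK : K.Adj w w' := (hadj w w').mp hΘ
        have hne2 : s(w, w') ≠ s(x, y) := by
          intro h
          exact hneq (by rw [← Sym2.map_pair_eq ι, ← Sym2.map_pair_eq ι, h])
        exact Or.inl ⟨w', rfl, hRw.trans ((deleteEdge_adj K _ w w').mpr ⟨hK, hne2⟩).reachable⟩
      · rcases hcross w v hΘ with h | rfl
        · exact absurd h hv
        · exact Or.inr ⟨fun w hw => hv ⟨w, hw⟩, hRw⟩
    · by_cases hv : ∃ w', v = ι w'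
      · obtain ⟨w', rfl⟩ := hv
        rcases hcross w' u hΘ.symm with ⟨w'', hw''⟩ | h
        · exact absurd hw'' (hnu w'')
        · exact Or.inl ⟨w', rfl, by rw [h]; exact hRa⟩
      · exact Or.inr ⟨fun w hw => hv ⟨w, hw⟩, hRa⟩
  have hPy : P (ι y) :=
    reachable_closed P hclosed hreach (Or.inl ⟨x, rfl, Reachable.refl x⟩)
  rcases hPy with ⟨w, hw, hRw⟩ | ⟨hnu, _⟩
  · exact hbr (hι hw ▸ hRw)
  · exact hnu y rfl

lemma side_even {V U : Type*} {H : SimpleGraph U} {K : SimpleGraph V}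
    {ι : V → U} (hι : Function.Injective ι) {a b : V}
    (hadj : ∀ x y, H.Adj (ι x) (ι y) ↔ (K.Adj x y ∧ s(x, y) ≠ s(a, b)))
    (hcross : ∀ x z, H.Adj (ι x) z → (∃ y, z = ι y) ∨ x = b)
    (hKab : K.Adj a b)
    {x : V}
    (hxa : K.connectedComponentMk x ≠ K.connectedComponentMk a) :
    cotreeCompEdges H (H.connectedComponentMk (ι x))
      = Sym2.map ι '' (cotreeCompEdges K (K.connectedComponentMk x)) := by
  have hba : K.connectedComponentMk b = K.connectedComponentMk a :=
    ConnectedComponent.sound hKab.symm.reachable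
  have hnab : ∀ {u v : V}, K.connectedComponentMk u = K.connectedComponentMk x →
      s(u, v) ≠ s(a, b) := by
    intro u v hcu h
    rw [Sym2.eq_iff] at h
    rcases h with ⟨rfl, rfl⟩ | ⟨rfl, rfl⟩
    · exact hxa (hcu.symm)
    · exact hxa (hcu.symm.trans hba)
  have hreach1 : ∀ w, K.Reachable x w →
      (K.connectedComponentMk w = K.connectedComponentMk x ∧ H.Reachable (ι x) (ι w)) := by
    intro w hw
    refine reachable_closed
      (fun w => K.connectedComponentMk w = K.connectedComponentMk x ∧
        H.Reachable (ι x) (ι w)) ?_ hw ⟨rfl, Reachable.refl _⟩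
    rintro u v ⟨hcu, hru⟩ huv
    have hcv : K.connectedComponentMk v = K.connectedComponentMk x :=
      (ConnectedComponent.sound huv.symm.reachable).trans hcu
    exact ⟨hcv, hru.trans ((hadj u v).mpr ⟨huv, hnab hcu⟩).reachable⟩
  have hreach2 : ∀ z, H.Reachable (ι x) z → ∃ w, z = ι w ∧ K.Reachable x w := by
    intro z hz
    refine reachable_closed (fun z => ∃ w, z = ι w ∧ K.Reachable x w) ?_ hz
      ⟨x, rfl, Reachable.refl _⟩
    rintro u v ⟨w, rfl, hw⟩ huv
    rcases hcross w v huv with ⟨w', rfl⟩ | h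
    · exact ⟨w', rfl, hw.trans ((hadj w w').mp huv).1.reachable⟩
    · have h1 := (hreach1 w hw).1
      rw [h] at h1
      exact absurd (h1.symm.trans hba) hxa
  apply Set.eq_of_subset_of_subset
  · intro e
    induction e using Sym2.ind with
    | _ u v =>
      rintro ⟨he, hcomp⟩
      rw [SimpleGraph.mem_edgeSet] at he
      have hcu : H.connectedComponentMk u = H.connectedComponentMk (ι x) :=
        hcomp u (Sym2.mem_mk_left u v)
      have hcv := hcomp v (Sym2.mem_mk_right u v)
      obtain ⟨w, rfl, hxw⟩ := hreach2 u ((ConnectedComponent.eq.mp hcu).symm)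
      obtain ⟨w', rfl, hxw'⟩ := hreach2 v ((ConnectedComponent.eq.mp hcv).symm)
      have hK := (hadj w w').mp he
      refine ⟨s(w, w'), ⟨(SimpleGraph.mem_edgeSet K).mpr hK.1, ?_⟩, Sym2.map_pair_eq ι w w'⟩
      intro m hm
      rcases Sym2.mem_iff.mp hm with rfl | rfl
      · exact (hreach1 m hxw).1
      · exact (hreach1 m hxw').1
  · rintro e ⟨e', h', rfl⟩
    revert h'
    induction e' using Sym2.ind with
    | _ w w' =>
      rintro ⟨he', hcomp'⟩
      rw [SimpleGraph.mem_edgeSet] at he'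
      have hcw := hcomp' w (Sym2.mem_mk_left w w')
      have hcw' := hcomp' w' (Sym2.mem_mk_right w w')
      have hH : H.Adj (ι w) (ι w') := (hadj _ _).mpr ⟨he', hnab hcw⟩
      rw [Sym2.map_pair_eq]
      refine ⟨(SimpleGraph.mem_edgeSet H).mpr hH, ?_⟩
      intro m hm
      rcases Sym2.mem_iff.mp hm with rfl | rfl
      · exact ConnectedComponent.sound ((hreach1 w (ConnectedComponent.exact hcw.symm)).2.symm)
      · exact ConnectedComponent.sound ((hreach1 w' (ConnectedComponent.exact hcw'.symm)).2.symm)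
/-- Odd 2-sum: given connected cubic graphs `G₁`, `G₂` with spanning trees `Tᵢ` whose
cotrees have exactly one odd component consisting of the single edge `eᵢ = s(aᵢ, bᵢ)`,
form `G` from `(G₁ − e₁) ∪ (G₂ − e₂)` by adding the two independent edges
`f₁ = s(a₁, a₂)` and `f₂ = s(b₁, b₂)` across. Then `(T₁ ∪ T₂) + f₁` is a spanning tree
of `G` whose cotree has exactly one odd component, namely the single edge `f₂`; in
particular `G` is upper-embeddable with odd Betti number. -/
theorem stmt19 {V₁ V₂ : Type*} [Fintype V₁] [Fintype V₂] [DecidableEq V₁] [DecidableEq V₂]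
    (G₁ : SimpleGraph V₁) (G₂ : SimpleGraph V₂)
    [DecidableRel G₁.Adj] [DecidableRel G₂.Adj]
    (hc₁ : G₁.Connected) (hc₂ : G₂.Connected)
    (h3₁ : ∀ v, G₁.degree v = 3) (h3₂ : ∀ v, G₂.degree v = 3)
    (T₁ : SimpleGraph V₁) (T₂ : SimpleGraph V₂)
    (hT₁ : T₁ ≤ G₁) (hT₂ : T₂ ≤ G₂) (ht₁ : T₁.IsTree) (ht₂ : T₂.IsTree)
    (a₁ b₁ : V₁) (a₂ b₂ : V₂) (hab₁ : a₁ ≠ b₁) (hab₂ : a₂ ≠ b₂)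
    (he₁ : s(a₁, b₁) ∈ (G₁ \ T₁).edgeSet)
    (he₂ : s(a₂, b₂) ∈ (G₂ \ T₂).edgeSet)
    (hodd₁ : cotreeCompEdges (G₁ \ T₁) ((G₁ \ T₁).connectedComponentMk a₁)
      = {s(a₁, b₁)})
    (hodd₂ : cotreeCompEdges (G₂ \ T₂) ((G₂ \ T₂).connectedComponentMk a₂)
      = {s(a₂, b₂)})
    (huniq₁ : ∀ c, Odd ((cotreeCompEdges (G₁ \ T₁) c).ncard) →
      c = (G₁ \ T₁).connectedComponentMk a₁)
    (huniq₂ : ∀ c, Odd ((cotreeCompEdges (G₂ \ T₂) c).ncard) →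
      c = (G₂ \ T₂).connectedComponentMk a₂)
    (G : SimpleGraph (V₁ ⊕ V₂)) [DecidableRel G.Adj]
    (hll : ∀ x y : V₁, G.Adj (.inl x) (.inl y) ↔ (G₁.Adj x y ∧ s(x, y) ≠ s(a₁, b₁)))
    (hrr : ∀ x y : V₂, G.Adj (.inr x) (.inr y) ↔ (G₂.Adj x y ∧ s(x, y) ≠ s(a₂, b₂)))
    (hlr : ∀ (x : V₁) (y : V₂), G.Adj (.inl x) (.inr y) ↔
      ((x = a₁ ∧ y = a₂) ∨ (x = b₁ ∧ y = b₂))) :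
    ∃ T : SimpleGraph (V₁ ⊕ V₂),
      T = SimpleGraph.fromEdgeSet
        ((Sym2.map Sum.inl '' T₁.edgeSet) ∪ (Sym2.map Sum.inr '' T₂.edgeSet) ∪
          {s(Sum.inl a₁, Sum.inr a₂)}) ∧
      T ≤ G ∧ T.IsTree ∧
      cotreeCompEdges (G \ T) ((G \ T).connectedComponentMk (Sum.inl b₁))
        = {s(Sum.inl b₁, Sum.inr b₂)} ∧
      (∀ c, Odd ((cotreeCompEdges (G \ T) c).ncard) →
        c = (G \ T).connectedComponentMk (Sum.inl b₁)) ∧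
      Odd ((G.edgeFinset.card : ℤ) - (Fintype.card (V₁ ⊕ V₂) : ℤ) + 1) := by
  classical
  set S : Set (Sym2 (V₁ ⊕ V₂)) :=
    (Sym2.map Sum.inl '' T₁.edgeSet) ∪ (Sym2.map Sum.inr '' T₂.edgeSet) ∪
      {s(Sum.inl a₁, Sum.inr a₂)} with hS
  set T : SimpleGraph (V₁ ⊕ V₂) := SimpleGraph.fromEdgeSet S with hT
  -- basic facts about e₁, e₂
  have hK₁ab : (G₁ \ T₁).Adj a₁ b₁ := (SimpleGraph.mem_edgeSet _).mp he₁
  have hK₂ab : (G₂ \ T₂).Adj a₂ b₂ := (SimpleGraph.mem_edgeSet _).mp he₂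
  have hnT₁ab : ¬ T₁.Adj a₁ b₁ := ((SimpleGraph.sdiff_adj G₁ T₁ a₁ b₁).mp hK₁ab).2
  have hnT₂ab : ¬ T₂.Adj a₂ b₂ := ((SimpleGraph.sdiff_adj G₂ T₂ a₂ b₂).mp hK₂ab).2
  -- adjacency characterization of T
  have hTll : ∀ x y : V₁, T.Adj (Sum.inl x) (Sum.inl y) ↔ T₁.Adj x y := by
    intro x y
    rw [hT, fromEdgeSet_adj]
    constructor
    · rintro ⟨hmem, hne⟩
      rcases hmem with (⟨e, he, heq⟩ | ⟨e, he, heq⟩) | heq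
      · have : e = s(x, y) := Sym2.map.injective Sum.inl_injective
          (heq.trans (Sym2.map_pair_eq Sum.inl x y).symm)
        rw [this] at he
        exact he
      · exfalso
        have hm : (Sum.inl x : V₁ ⊕ V₂) ∈ Sym2.map Sum.inr e :=
          heq ▸ Sym2.mem_mk_left _ _
        rw [Sym2.mem_map] at hm
        obtain ⟨a, _, ha⟩ := hm
        exact Sum.inr_ne_inl ha
      · simp only [Set.mem_singleton_iff, Sym2.eq_iff] at heq
        rcases heq with ⟨_, h⟩ | ⟨h, _⟩ <;> exact absurd h (by simp)
    · intro h
      exact ⟨Or.inl (Or.inl ⟨s(x, y), (SimpleGraph.mem_edgeSet T₁).mpr h,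
        Sym2.map_pair_eq Sum.inl x y⟩), fun hc => h.ne (Sum.inl.inj hc)⟩
  have hTrr : ∀ x y : V₂, T.Adj (Sum.inr x) (Sum.inr y) ↔ T₂.Adj x y := by
    intro x y
    rw [hT, fromEdgeSet_adj]
    constructor
    · rintro ⟨hmem, hne⟩
      rcases hmem with (⟨e, he, heq⟩ | ⟨e, he, heq⟩) | heq
      · exfalso
        have hm : (Sum.inr x : V₁ ⊕ V₂) ∈ Sym2.map Sum.inl e :=
          heq ▸ Sym2.mem_mk_left _ _
        rw [Sym2.mem_map] at hm
        obtain ⟨a, _, ha⟩ := hm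
        exact Sum.inl_ne_inr ha
      · have : e = s(x, y) := Sym2.map.injective Sum.inr_injective
          (heq.trans (Sym2.map_pair_eq Sum.inr x y).symm)
        rw [this] at he
        exact he
      · simp only [Set.mem_singleton_iff, Sym2.eq_iff] at heq
        rcases heq with ⟨h, _⟩ | ⟨_, h⟩ <;> exact absurd h (by simp)
    · intro h
      exact ⟨Or.inl (Or.inr ⟨s(x, y), (SimpleGraph.mem_edgeSet T₂).mpr h,
        Sym2.map_pair_eq Sum.inr x y⟩), fun hc => h.ne (Sum.inr.inj hc)⟩
  have hTlr : ∀ (x : V₁) (y : V₂), T.Adj (Sum.inl x) (Sum.inr y) ↔ (x = a₁ ∧ y = a₂) := by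
    intro x y
    rw [hT, fromEdgeSet_adj]
    constructor
    · rintro ⟨hmem, hne⟩
      rcases hmem with (⟨e, he, heq⟩ | ⟨e, he, heq⟩) | heq
      · exfalso
        have hm : (Sum.inr y : V₁ ⊕ V₂) ∈ Sym2.map Sum.inl e :=
          heq ▸ Sym2.mem_mk_right _ _
        rw [Sym2.mem_map] at hm
        obtain ⟨a, _, ha⟩ := hm
        exact Sum.inl_ne_inr ha
      · exfalso
        have hm : (Sum.inl x : V₁ ⊕ V₂) ∈ Sym2.map Sum.inr e :=
          heq ▸ Sym2.mem_mk_left _ _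
        rw [Sym2.mem_map] at hm
        obtain ⟨a, _, ha⟩ := hm
        exact Sum.inr_ne_inl ha
      · simp only [Set.mem_singleton_iff, Sym2.eq_iff] at heq
        rcases heq with ⟨h1, h2⟩ | ⟨h1, h2⟩
        · exact ⟨Sum.inl.inj h1, Sum.inr.inj h2⟩
        · exact absurd h1 (by simp)
    · rintro ⟨rfl, rfl⟩
      exact ⟨Or.inr rfl, by simp⟩
  -- T ≤ G
  have hT₁ne : ∀ {x y : V₁}, T₁.Adj x y → s(x, y) ≠ s(a₁, b₁) := by
    intro x y h hc
    rw [Sym2.eq_iff] at hc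
    rcases hc with ⟨rfl, rfl⟩ | ⟨rfl, rfl⟩
    · exact hnT₁ab h
    · exact hnT₁ab h.symm
  have hT₂ne : ∀ {x y : V₂}, T₂.Adj x y → s(x, y) ≠ s(a₂, b₂) := by
    intro x y h hc
    rw [Sym2.eq_iff] at hc
    rcases hc with ⟨rfl, rfl⟩ | ⟨rfl, rfl⟩
    · exact hnT₂ab h
    · exact hnT₂ab h.symm
  have hTG : T ≤ G := by
    intro u v h
    match u, v with
    | Sum.inl x, Sum.inl y =>
      have h' := (hTll x y).mp h
      exact (hll x y).mpr ⟨hT₁ h', hT₁ne h'⟩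
    | Sum.inl x, Sum.inr y =>
      exact (hlr x y).mpr (Or.inl ((hTlr x y).mp h))
    | Sum.inr x, Sum.inl y =>
      exact ((hlr y x).mpr (Or.inl ((hTlr y x).mp h.symm))).symm
    | Sum.inr x, Sum.inr y =>
      have h' := (hTrr x y).mp h
      exact (hrr x y).mpr ⟨hT₂ h', hT₂ne h'⟩
  -- adjacency characterization of G \ T
  have hHll : ∀ x y : V₁, (G \ T).Adj (Sum.inl x) (Sum.inl y) ↔
      ((G₁ \ T₁).Adj x y ∧ s(x, y) ≠ s(a₁, b₁)) := by
    intro x y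
    rw [SimpleGraph.sdiff_adj, SimpleGraph.sdiff_adj, hll, hTll]
    tauto
  have hHrr : ∀ x y : V₂, (G \ T).Adj (Sum.inr x) (Sum.inr y) ↔
      ((G₂ \ T₂).Adj x y ∧ s(x, y) ≠ s(a₂, b₂)) := by
    intro x y
    rw [SimpleGraph.sdiff_adj, SimpleGraph.sdiff_adj, hrr, hTrr]
    tauto
  have hHlr : ∀ (x : V₁) (y : V₂), (G \ T).Adj (Sum.inl x) (Sum.inr y) ↔
      (x = b₁ ∧ y = b₂) := by
    intro x y
    rw [SimpleGraph.sdiff_adj, hlr, hTlr]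
    constructor
    · rintro ⟨(⟨rfl, rfl⟩ | h), hnt⟩
      · exact absurd ⟨rfl, rfl⟩ hnt
      · exact h
    · rintro ⟨rfl, rfl⟩
      exact ⟨Or.inr ⟨rfl, rfl⟩, fun ht => hab₁ ht.1.symm⟩
  -- T is a tree
  have hconn : T.Connected := by
    rw [connected_iff]
    refine ⟨?_, ⟨Sum.inl a₁⟩⟩
    have key : ∀ u, T.Reachable u (Sum.inl a₁) := by
      intro u
      cases u with
      | inl x =>
        exact Reachable.map ⟨Sum.inl, fun {p q} h => (hTll p q).mpr h⟩
          (ht₁.isConnected.preconnected x a₁)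
      | inr y =>
        refine Reachable.trans (Reachable.map ⟨Sum.inr, fun {p q} h => (hTrr p q).mpr h⟩
          (ht₂.isConnected.preconnected y a₂)) ?_
        exact ((hTlr a₁ a₂).mpr ⟨rfl, rfl⟩).symm.reachable
    intro u v
    exact (key u).trans (key v).symm
  have hcrossT₁ : ∀ (x : V₁) z, T.Adj (Sum.inl x) z → (∃ y, z = Sum.inl y) ∨ x = a₁ := by
    intro x z hz
    cases z with
    | inl y => exact Or.inl ⟨y, rfl⟩
    | inr y => exact Or.inr ((hTlr x y).mp hz).1
  have hcrossT₂ : ∀ (x : V₂) z, T.Adj (Sum.inr x) z → (∃ y, z = Sum.inr y) ∨ x = a₂ := by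
    intro x z hz
    cases z with
    | inl y => exact Or.inr ((hTlr y x).mp hz.symm).2
    | inr y => exact Or.inl ⟨y, rfl⟩
  have hbrf : ¬ (T \ fromEdgeSet {s(Sum.inl a₁, Sum.inr a₂)}).Reachable
      (Sum.inl a₁) (Sum.inr a₂) := by
    intro hreach
    have hP := reachable_closed (fun z => ∃ w, z = Sum.inl w) ?_ hreach ⟨a₁, rfl⟩
    · obtain ⟨w, hw⟩ := hP
      exact Sum.inr_ne_inl hw
    · intro u v hu huv
      rw [deleteEdge_adj] at huv
      obtain ⟨w, rfl⟩ := hu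
      cases v with
      | inl y => exact ⟨y, rfl⟩
      | inr y =>
        obtain ⟨rfl, rfl⟩ := (hTlr w y).mp huv.1
        exact absurd rfl huv.2
  have hacyc : T.IsAcyclic := by
    rw [isAcyclic_iff_forall_adj_isBridge]
    intro u v h
    match u, v with
    | Sum.inl x, Sum.inl y =>
      have h' := (hTll x y).mp h
      have hbr := (isBridge_iff.mp
        ((isAcyclic_iff_forall_adj_isBridge.mp ht₁.IsAcyclic) h'))
      exact isBridge_iff.mpr (bridge_side Sum.inl_injective a₁ hTll hcrossT₁ hbr)
    | Sum.inr x, Sum.inr y =>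
      have h' := (hTrr x y).mp h
      have hbr := (isBridge_iff.mp
        ((isAcyclic_iff_forall_adj_isBridge.mp ht₂.IsAcyclic) h'))
      exact isBridge_iff.mpr (bridge_side Sum.inr_injective a₂ hTrr hcrossT₂ hbr)
    | Sum.inl x, Sum.inr y =>
      obtain ⟨rfl, rfl⟩ := (hTlr x y).mp h
      exact isBridge_iff.mpr hbrf
    | Sum.inr x, Sum.inl y =>
      obtain ⟨rfl, rfl⟩ := (hTlr y x).mp h.symm
      rw [Sym2.eq_swap]
      exact isBridge_iff.mpr hbrf
  have hTree : T.IsTree := ⟨hconn, hacyc⟩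
  -- cotree component of inl b₁
  have hcomp_b₁ : (G₁ \ T₁).connectedComponentMk b₁ = (G₁ \ T₁).connectedComponentMk a₁ :=
    ConnectedComponent.sound hK₁ab.symm.reachable
  have hcomp_b₂ : (G₂ \ T₂).connectedComponentMk b₂ = (G₂ \ T₂).connectedComponentMk a₂ :=
    ConnectedComponent.sound hK₂ab.symm.reachable
  have hHf₂ : (G \ T).Adj (Sum.inl b₁) (Sum.inr b₂) := (hHlr b₁ b₂).mpr ⟨rfl, rfl⟩
  have hPclosed : ∀ u v, (u = Sum.inl b₁ ∨ u = Sum.inr b₂) → (G \ T).Adj u v →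
      (v = Sum.inl b₁ ∨ v = Sum.inr b₂) := by
    rintro u v (rfl | rfl) huv
    · cases v with
      | inl y =>
        exfalso
        have h' := (hHll b₁ y).mp huv
        exact h'.2 (edge_eq_of_comp_eq hodd₁ h'.1 hcomp_b₁)
      | inr y => exact Or.inr (by rw [((hHlr b₁ y).mp huv).2])
    · cases v with
      | inl y => exact Or.inl (by rw [((hHlr y b₂).mp huv.symm).1])
      | inr y =>
        exfalso
        have h' := (hHrr b₂ y).mp huv
        exact h'.2 (edge_eq_of_comp_eq hodd₂ h'.1 hcomp_b₂)
  have hcot4 : cotreeCompEdges (G \ T) ((G \ T).connectedComponentMk (Sum.inl b₁))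
      = {s(Sum.inl b₁, Sum.inr b₂)} := by
    apply Set.eq_of_subset_of_subset
    · intro e
      induction e using Sym2.ind with
      | _ u v =>
        rintro ⟨he, hcomp⟩
        rw [SimpleGraph.mem_edgeSet] at he
        have hPu : u = Sum.inl b₁ ∨ u = Sum.inr b₂ :=
          reachable_closed _ hPclosed
            ((ConnectedComponent.eq.mp (hcomp u (Sym2.mem_mk_left u v))).symm) (Or.inl rfl)
        have hPv : v = Sum.inl b₁ ∨ v = Sum.inr b₂ :=
          reachable_closed _ hPclosed
            ((ConnectedComponent.eq.mp (hcomp v (Sym2.mem_mk_right u v))).symm) (Or.inl rfl)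
        rcases hPu with rfl | rfl <;> rcases hPv with rfl | rfl
        · exact absurd rfl he.ne
        · rfl
        · exact Set.mem_singleton_iff.mpr Sym2.eq_swap
        · exact absurd rfl he.ne
    · intro e he
      rw [Set.mem_singleton_iff] at he
      subst he
      exact mem_cotree_of_adj hHf₂
  have hHcross₁ : ∀ (x : V₁) z, (G \ T).Adj (Sum.inl x) z →
      (∃ y, z = Sum.inl y) ∨ x = b₁ := by
    intro x z hz
    cases z with
    | inl y => exact Or.inl ⟨y, rfl⟩
    | inr y => exact Or.inr ((hHlr x y).mp hz).1
  have hHcross₂ : ∀ (x : V₂) z, (G \ T).Adj (Sum.inr x) z →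
      (∃ y, z = Sum.inr y) ∨ x = b₂ := by
    intro x z hz
    cases z with
    | inl y => exact Or.inr ((hHlr y x).mp hz.symm).2
    | inr y => exact Or.inl ⟨y, rfl⟩
  have hcot5 : ∀ c, Odd ((cotreeCompEdges (G \ T) c).ncard) →
      c = (G \ T).connectedComponentMk (Sum.inl b₁) := by
    intro c hoddc
    have hne0 : (cotreeCompEdges (G \ T) c).ncard ≠ 0 := by
      intro h
      rw [h] at hoddc
      simp at hoddc
    obtain ⟨e, he⟩ := Set.nonempty_of_ncard_ne_zero hne0
    revert he
    induction e using Sym2.ind with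
    | _ u v =>
      rintro ⟨he, hcomp⟩
      rw [SimpleGraph.mem_edgeSet] at he
      have hcu : (G \ T).connectedComponentMk u = c := hcomp u (Sym2.mem_mk_left u v)
      rcases u with x | x <;> rcases v with y | y
      · exfalso
        have h' := (hHll x y).mp he
        have hxa : (G₁ \ T₁).connectedComponentMk x ≠ (G₁ \ T₁).connectedComponentMk a₁ :=
          fun hx => h'.2 (edge_eq_of_comp_eq hodd₁ h'.1 hx)
        have hset := side_even Sum.inl_injective hHll hHcross₁ hK₁ab hxa
        rw [hcu] at hset
        rw [hset, Set.ncard_image_of_injective _ (Sym2.map.injective Sum.inl_injective)]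
          at hoddc
        exact hxa (huniq₁ _ hoddc)
      · obtain ⟨rfl, rfl⟩ := (hHlr x y).mp he
        exact hcu.symm
      · have h12 := (hHlr y x).mp he.symm
        rw [← hcu, ConnectedComponent.sound he.reachable, h12.1]
      · exfalso
        have h' := (hHrr x y).mp he
        have hxa : (G₂ \ T₂).connectedComponentMk x ≠ (G₂ \ T₂).connectedComponentMk a₂ :=
          fun hx => h'.2 (edge_eq_of_comp_eq hodd₂ h'.1 hx)
        have hset := side_even Sum.inr_injective hHrr hHcross₂ hK₂ab hxa
        rw [hcu] at hset
        rw [hset, Set.ncard_image_of_injective _ (Sym2.map.injective Sum.inr_injective)]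
          at hoddc
        exact hxa (huniq₂ _ hoddc)
  have hpar : Odd ((G.edgeFinset.card : ℤ) - (Fintype.card (V₁ ⊕ V₂) : ℤ) + 1) := by
    have hoddH : Odd ((G \ T).edgeSet.ncard) := by
      apply odd_ncard_edgeSet (G \ T) ((G \ T).connectedComponentMk (Sum.inl b₁))
      · rw [hcot4]
        simp
      · intro c hc
        rw [← Nat.not_odd_iff_even]
        exact fun ho => hc (hcot5 c ho)
    haveI : Fintype T.edgeSet := Fintype.ofFinite _
    have hTcard : T.edgeFinset.card + 1 = Fintype.card (V₁ ⊕ V₂) := hTree.card_edgeFinset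
    have hsub : T.edgeSet ⊆ G.edgeSet := SimpleGraph.edgeSet_mono hTG
    have hdiff : (G \ T).edgeSet.ncard = G.edgeSet.ncard - T.edgeSet.ncard := by
      rw [SimpleGraph.edgeSet_sdiff]
      exact Set.ncard_diff hsub (Set.toFinite _)
    have hle : T.edgeSet.ncard ≤ G.edgeSet.ncard := Set.ncard_le_ncard hsub (Set.toFinite _)
    have hG : G.edgeFinset.card = G.edgeSet.ncard := by
      rw [← SimpleGraph.coe_edgeFinset, Set.ncard_coe_finset]
    have hTc : T.edgeFinset.card = T.edgeSet.ncard := by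
      rw [← SimpleGraph.coe_edgeFinset, Set.ncard_coe_finset]
    have hx : ((G.edgeFinset.card : ℤ) - (Fintype.card (V₁ ⊕ V₂) : ℤ) + 1)
        = (((G \ T).edgeSet.ncard : ℕ) : ℤ) := by
      omega
    rw [hx]
    exact (Int.odd_coe_nat _).mpr hoddH
  exact ⟨T, rfl, hTG, hTree, hcot4, hcot5, hpar⟩
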